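/- Let S be a finite set and let π be a rational probability distribution on S; write π(s) = a_s/m where m is a positive integer and each a_s is a nonnegative integer with ∑_s a_s = m. Then there exists a sequence s₁, s₂, … in S that is periodic with period m (s_{k+m} = s_k for all k ≥ 1) and satisfies, for all k ≥ 1 and all s ∈ S, |N_k(s) − k·π(s)| < 1, where N_k(s) := #{i : 1 ≤ i ≤ k and s_i = s}. Moreover N_m(s) = m·π(s) = a_s for every s ∈ S. -/

import Mathlib

open Finset

section Aux

variable {S : Type*} [Fintype S] [DecidableEq S]

/-- Invariant for the EDF greedy schedule: after `k` steps with counts `N`,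
the counts sum to `k`, no symbol is over-scheduled by 1 or more, and for every
horizon `D ≥ k` the outstanding work with deadline at most `D` fits in `D - k` slots. -/
private def inv8 (m : ℕ) (a : S → ℕ) (k : ℕ) (N : S → ℕ) : Prop :=
  (∑ s, N s = k) ∧ (∀ s, m * N s < k * a s + m) ∧
  (∀ D, k ≤ D → ∑ s, (D * a s / m - N s) ≤ D - k)

private lemma ceil_div_le_iff {a x C : ℕ} (ha : 0 < a) :
    (x + a - 1) / a ≤ C ↔ x ≤ C * a := by
  rw [← Nat.lt_succ_iff, Nat.div_lt_iff_lt_mul ha, Nat.succ_mul]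
  generalize C * a = y
  omega

private lemma inv8_zero {m : ℕ} (hm : 0 < m) (a : S → ℕ) (ha : ∑ s, a s = m) :
    inv8 m a 0 (fun _ => 0) := by
  refine ⟨by simp, fun s => by simpa using hm, fun D _ => ?_⟩
  simp only [Nat.sub_zero]
  calc ∑ s, D * a s / m ≤ (∑ s, D * a s) / m := by
        rw [Nat.le_div_iff_mul_le hm, Finset.sum_mul]
        exact Finset.sum_le_sum fun s _ => Nat.div_mul_le_self _ _
    _ = D := by rw [← Finset.mul_sum, ha, Nat.mul_div_cancel _ hm]

private lemma inv8_step {m : ℕ} (hm : 0 < m) {a : S → ℕ} (ha : ∑ s, a s = m)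
    {k : ℕ} {N : S → ℕ} (h : inv8 m a k N) :
    ∃ s, m * N s < (k + 1) * a s ∧
      inv8 m a (k + 1) (Function.update N s (N s + 1)) := by
  obtain ⟨hsum, hB, hC⟩ := h
  -- the set of eligible symbols is nonempty
  set elig : Finset S := Finset.univ.filter (fun s => m * N s < (k + 1) * a s) with helig
  have hne : elig.Nonempty := by
    by_contra hcon
    rw [Finset.not_nonempty_iff_eq_empty, Finset.filter_eq_empty_iff] at hcon
    have h1 : (k + 1) * m ≤ m * k := by
      calc (k + 1) * m = ∑ s, (k + 1) * a s := by rw [← Finset.mul_sum, ha]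
        _ ≤ ∑ s, m * N s := Finset.sum_le_sum (fun s _ => by
            have := hcon (Finset.mem_univ s); omega)
        _ = m * k := by rw [← Finset.mul_sum, hsum]
    nlinarith
  -- pick an eligible symbol with minimal deadline
  obtain ⟨j, hjmem, hjmin⟩ :=
    Finset.exists_min_image elig (fun s => (m * (N s + 1) + a s - 1) / a s) hne
  have hjelig : m * N j < (k + 1) * a j := (Finset.mem_filter.mp hjmem).2
  have haj : 0 < a j := by
    rcases Nat.eq_zero_or_pos (a j) with h0 | h0
    · rw [h0, Nat.mul_zero] at hjelig; omega
    · exact h0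
  refine ⟨j, hjelig, ?_, ?_, ?_⟩
  · -- sums
    rw [Finset.sum_update_of_mem (Finset.mem_univ j)]
    have h2 : N j + ∑ s ∈ Finset.univ \ {j}, N s = k := by
      rw [Finset.sdiff_singleton_eq_erase, Finset.add_sum_erase _ _ (Finset.mem_univ j), hsum]
    omega
  · -- no over-scheduling
    intro s
    rcases eq_or_ne s j with rfl | hsj
    · rw [Function.update_self]
      have h2 : m * (N s + 1) = m * N s + m := by ring
      have h3 : (k + 1) * a s + m = (k + 1) * a s + m := rfl
      linarith
    · rw [Function.update_of_ne hsj]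
      have h2 : k * a s ≤ (k + 1) * a s := Nat.mul_le_mul_right _ (by omega)
      have := hB s
      linarith
  · -- the deadline invariant
    intro D hD
    have hkD : k ≤ D := by omega
    have hT : ∑ s, (D * a s / m - N s) ≤ D - k := hC D hkD
    by_cases hcase : ∑ s, (D * a s / m - N s) ≤ D - (k + 1)
    · refine le_trans (Finset.sum_le_sum fun s _ => ?_) hcase
      rcases eq_or_ne s j with rfl | hsj
      · rw [Function.update_self]; omega
      · rw [Function.update_of_ne hsj]
    · -- tight case
      have hTeq : ∑ s, (D * a s / m - N s) = D - k := by omega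
      -- there is an eligible symbol with an outstanding copy of deadline ≤ D
      have hex : ∃ s, m * N s < (k + 1) * a s ∧ N s < D * a s / m := by
        by_contra hcon
        push_neg at hcon
        have key : ∀ s : S, m * (D * a s / m - N s) ≤ (D - (k + 1)) * a s := by
          intro s
          by_cases he : m * N s < (k + 1) * a s
          · have h0 : D * a s / m - N s = 0 := by have := hcon s he; omega
            rw [h0, Nat.mul_zero]; exact Nat.zero_le _
          · push_neg at he
            have h1 : m * (D * a s / m) ≤ D * a s := by
              rw [mul_comm]; exact Nat.div_mul_le_self _ _
            have h2 : (D - (k + 1)) * a s = D * a s - (k + 1) * a s := by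
              rw [Nat.sub_mul]
            have h3 : m * (D * a s / m - N s) = m * (D * a s / m) - m * N s := by
              rw [mul_comm m (D * a s / m - N s), Nat.sub_mul,
                mul_comm (D * a s / m) m, mul_comm (N s) m]
            rw [h2, h3]
            omega
        have hsum2 : m * ∑ s, (D * a s / m - N s) ≤ (D - (k + 1)) * m := by
          rw [Finset.mul_sum]
          calc ∑ s, m * (D * a s / m - N s) ≤ ∑ s, (D - (k + 1)) * a s :=
                Finset.sum_le_sum fun s _ => key s
            _ = (D - (k + 1)) * m := by rw [← Finset.mul_sum, ha]
        rw [hTeq, mul_comm (D - (k+1)) m] at hsum2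
        have hle := Nat.le_of_mul_le_mul_left hsum2 hm
        omega
      obtain ⟨s₀, hs₀e, hs₀t⟩ := hex
      have ha₀ : 0 < a s₀ := by
        rcases Nat.eq_zero_or_pos (a s₀) with h0 | h0
        · rw [h0, Nat.mul_zero] at hs₀e; omega
        · exact h0
      have h₀ : m * (N s₀ + 1) ≤ D * a s₀ := by
        have h2 : m * (N s₀ + 1) ≤ m * (D * a s₀ / m) := Nat.mul_le_mul_left _ (by omega)
        have h3 : m * (D * a s₀ / m) ≤ D * a s₀ := by
          rw [mul_comm]; exact Nat.div_mul_le_self _ _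
        omega
      have hmem₀ : s₀ ∈ elig := Finset.mem_filter.mpr ⟨Finset.mem_univ _, hs₀e⟩
      have hdl₀ : (m * (N s₀ + 1) + a s₀ - 1) / a s₀ ≤ D :=
        (ceil_div_le_iff ha₀).mpr h₀
      have hdj : m * (N j + 1) ≤ D * a j :=
        (ceil_div_le_iff haj).mp (le_trans (hjmin s₀ hmem₀) hdl₀)
      have htj : N j < D * a j / m := by
        have : N j + 1 ≤ D * a j / m := by
          rw [Nat.le_div_iff_mul_le hm, mul_comm]
          exact hdj
        omega
      -- conclude
      have hsplit : ∀ g : S → ℕ, ∑ s, g s = g j + ∑ s ∈ Finset.univ.erase j, g s :=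
        fun g => (Finset.add_sum_erase _ g (Finset.mem_univ j)).symm
      have hagree : ∑ s ∈ Finset.univ.erase j, (D * a s / m - Function.update N j (N j + 1) s)
          = ∑ s ∈ Finset.univ.erase j, (D * a s / m - N s) := by
        refine Finset.sum_congr rfl fun s hs => ?_
        rw [Function.update_of_ne (Finset.mem_erase.mp hs).1]
      rw [hsplit (fun s => D * a s / m - Function.update N j (N j + 1) s), hagree,
        Function.update_self]
      rw [hsplit (fun s => D * a s / m - N s)] at hTeq
      omega

/-- The greedy chain of count-states, carrying its invariant. -/
private noncomputable def chain8 (m : ℕ) (hm : 0 < m) (a : S → ℕ) (ha : ∑ s, a s = m) :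
    ∀ k : ℕ, {N : S → ℕ // inv8 m a k N}
  | 0 => ⟨fun _ => 0, inv8_zero hm a ha⟩
  | k + 1 =>
    ⟨Function.update (chain8 m hm a ha k).1
        (Classical.choose (inv8_step hm ha (chain8 m hm a ha k).2))
        ((chain8 m hm a ha k).1
          (Classical.choose (inv8_step hm ha (chain8 m hm a ha k).2)) + 1),
      (Classical.choose_spec (inv8_step hm ha (chain8 m hm a ha k).2)).2⟩

/-- The greedy sequence (one period of it). -/
private noncomputable def seq8 (m : ℕ) (hm : 0 < m) (a : S → ℕ) (ha : ∑ s, a s = m)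
    (k : ℕ) : S :=
  Classical.choose (inv8_step hm ha (chain8 m hm a ha k).2)

private lemma count8 (m : ℕ) (hm : 0 < m) (a : S → ℕ) (ha : ∑ s, a s = m) (k : ℕ) (s : S) :
    ((Finset.range k).filter (fun i => seq8 m hm a ha i = s)).card
      = (chain8 m hm a ha k).1 s := by
  induction k with
  | zero => simp [chain8]
  | succ k ih =>
    have hstep : (chain8 m hm a ha (k + 1)).1
        = Function.update (chain8 m hm a ha k).1 (seq8 m hm a ha k)
            ((chain8 m hm a ha k).1 (seq8 m hm a ha k) + 1) := rfl
    rw [hstep, Finset.range_add_one, Finset.filter_insert]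
    by_cases hs : seq8 m hm a ha k = s
    · rw [if_pos hs, Finset.card_insert_of_notMem (by simp), ih, ← hs,
        Function.update_self]
    · rw [if_neg hs, ih, Function.update_of_ne (fun h => hs h.symm)]

end Aux

/-- Rational case with periodicity: if `π(s) = a_s / m` with `a_s ∈ ℕ`, `∑_s a_s = m`,
`m ≥ 1`, then there is a sequence `s₁, s₂, …` in `S` (here `seq k` is `s_{k+1}`) that
is periodic with period `m` and satisfies `|N_k(s) - k·π(s)| < 1` for all `k ≥ 1` and
`s ∈ S`; moreover `N_m(s) = m·π(s) = a_s` for every `s`. -/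
theorem stmt_8 {S : Type*} [Fintype S] [DecidableEq S] [Nonempty S]
    (m : ℕ) (hm : 0 < m) (a : S → ℕ) (ha : ∑ s, a s = m)
    (π : S → ℝ) (hπ : ∀ s, π s = (a s : ℝ) / m) :
    ∃ seq : ℕ → S,
      (∀ k : ℕ, seq (k + m) = seq k) ∧
      (∀ k : ℕ, 1 ≤ k → ∀ s : S,
        |(((Finset.range k).filter (fun i => seq i = s)).card : ℝ) - k * π s| < 1) ∧
      (∀ s : S, ((Finset.range m).filter (fun i => seq i = s)).card = a s) ∧
      (∀ s : S, (m : ℝ) * π s = (a s : ℝ)) := by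
  classical
  set seq : ℕ → S := fun i => seq8 m hm a ha (i % m) with hseq
  -- basic invariant consequences
  have hlow : ∀ k s, k * a s / m ≤ (chain8 m hm a ha k).1 s := by
    intro k s
    have h := (chain8 m hm a ha k).2.2.2 k le_rfl
    rw [Nat.sub_self] at h
    have h1 : k * a s / m - (chain8 m hm a ha k).1 s
        ≤ ∑ x, (k * a x / m - (chain8 m hm a ha k).1 x) :=
      Finset.single_le_sum (f := fun x => k * a x / m - (chain8 m hm a ha k).1 x)
        (fun x _ => Nat.zero_le _) (Finset.mem_univ s)
    omega
  have hboundsN : ∀ k s, m * (chain8 m hm a ha k).1 s < k * a s + m ∧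
      k * a s < m * (chain8 m hm a ha k).1 s + m := by
    intro k s
    refine ⟨(chain8 m hm a ha k).2.2.1 s, ?_⟩
    have h1 := hlow k s
    have h2 := Nat.div_add_mod (k * a s) m
    have h3 : k * a s % m < m := Nat.mod_lt _ hm
    have h4 : m * (k * a s / m) ≤ m * (chain8 m hm a ha k).1 s :=
      Nat.mul_le_mul_left _ h1
    omega
  -- the first period schedules each symbol exactly `a s` times
  have hNm : ∀ s, (chain8 m hm a ha m).1 s = a s := by
    have hle : ∀ s ∈ Finset.univ, a s ≤ (chain8 m hm a ha m).1 s := by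
      intro s _
      have := hlow m s
      rwa [Nat.mul_div_cancel_left _ hm] at this
    have hsums : ∑ s, a s = ∑ s, (chain8 m hm a ha m).1 s := by
      rw [(chain8 m hm a ha m).2.1, ha]
    intro s
    exact ((Finset.sum_eq_sum_iff_of_le hle).mp hsums s (Finset.mem_univ s)).symm
  -- counts of the wrapped sequence, for k ≤ m
  have hcount_le : ∀ k, k ≤ m → ∀ s,
      ((Finset.range k).filter (fun i => seq i = s)).card = (chain8 m hm a ha k).1 s := by
    intro k hk s
    rw [← count8 m hm a ha k s]
    congr 1
    refine Finset.filter_congr fun i hi => ?_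
    rw [Finset.mem_range] at hi
    rw [hseq]
    simp only [Nat.mod_eq_of_lt (lt_of_lt_of_le hi hk)]
  -- periodicity
  have hper : ∀ k, seq (k + m) = seq k := by
    intro k
    simp only [hseq, Nat.add_mod_right]
  -- counts add one period at a time
  have hadd : ∀ k s, ((Finset.range (m + k)).filter (fun i => seq i = s)).card
      = a s + ((Finset.range k).filter (fun i => seq i = s)).card := by
    intro k s
    rw [Finset.range_add, Finset.filter_union, Finset.card_union_of_disjoint, Finset.filter_map,
      Finset.card_map]
    · congr 1
      · rw [hcount_le m le_rfl s, hNm]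
      · congr 1
        refine Finset.filter_congr fun i _ => ?_
        show (seq (m + i) = s) ↔ (seq i = s)
        rw [show m + i = i + m from by omega, hper]
    · refine Finset.disjoint_left.mpr fun x hx hx' => ?_
      obtain ⟨hx1, -⟩ := Finset.mem_filter.mp hx
      obtain ⟨hx2, -⟩ := Finset.mem_filter.mp hx'
      rw [Finset.mem_range] at hx1
      obtain ⟨i, -, rfl⟩ := Finset.mem_map.mp hx2
      simp only [addLeftEmbedding_apply] at hx1
      omega
  -- integer discrepancy bounds for all k
  have hbounds : ∀ k s, m * ((Finset.range k).filter (fun i => seq i = s)).card < k * a s + m ∧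
      k * a s < m * ((Finset.range k).filter (fun i => seq i = s)).card + m := by
    intro k
    induction k using Nat.strong_induction_on with
    | _ k ih =>
      intro s
      by_cases hk : k ≤ m
      · rw [hcount_le k hk s]; exact hboundsN k s
      · push_neg at hk
        have hk' : k = m + (k - m) := by omega
        have h1 := ih (k - m) (by omega) s
        rw [hk', hadd (k - m) s]
        have h2 : m * (a s + ((Finset.range (k - m)).filter (fun i => seq i = s)).card)
            = m * a s + m * ((Finset.range (k - m)).filter (fun i => seq i = s)).card := by ring
        have h3 : (m + (k - m)) * a s = m * a s + (k - m) * a s := by ring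
        omega
  refine ⟨seq, hper, ?_, ?_, ?_⟩
  · intro k _ s
    obtain ⟨h1, h2⟩ := hbounds k s
    have hm' : (0 : ℝ) < m := by exact_mod_cast hm
    rw [hπ, abs_sub_lt_iff]
    have h1' : (m : ℝ) * ((Finset.range k).filter (fun i => seq i = s)).card
        < k * a s + m := by exact_mod_cast h1
    have h2' : (k : ℝ) * a s
        < m * ((Finset.range k).filter (fun i => seq i = s)).card + m := by exact_mod_cast h2
    constructor
    · rw [show (((Finset.range k).filter (fun i => seq i = s)).card : ℝ)
          - k * ((a s : ℝ) / m)
          = ((m : ℝ) * ((Finset.range k).filter (fun i => seq i = s)).card - k * a s) / m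
        from by field_simp, div_lt_one hm']
      linarith
    · rw [show (k : ℝ) * ((a s : ℝ) / m)
          - (((Finset.range k).filter (fun i => seq i = s)).card : ℝ)
          = ((k : ℝ) * a s - m * ((Finset.range k).filter (fun i => seq i = s)).card) / m
        from by field_simp, div_lt_one hm']
      linarith
  · intro s
    rw [hcount_le m le_rfl s, hNm]
  · intro s
    rw [hπ]
    field_simp
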